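/- Let X be a compact Hausdorff space with a basis 𝒰 of open sets satisfying property (H) for a CW-complex K (every continuous map bd(U) → K extends over closure(U) \ V for any U ∈ 𝒰 and any nonempty open V ⊆ U). Let Y ⊆ X be closed, a ∈ Y a boundary point of Y, a ∈ U ∈ 𝒰, and assume every continuous map from a closed subset of bd(U) into K extends over bd(U). Then every continuous map f : Y \ U → K extends continuously over Y. -/

import Mathlib

open Set in
lemma continuousOn_union_closed {X L : Type*} [TopologicalSpace X] [TopologicalSpace L]
    {f : X → L} {s t : Set X} (hs : IsClosed s) (ht : IsClosed t)
    (hfs : ContinuousOn f s) (hft : ContinuousOn f t) : ContinuousOn f (s ∪ t) := by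
  intro x hx
  rcases hx with hx | hx
  · refine ContinuousWithinAt.union (hfs x hx) ?_
    by_cases hxt : x ∈ t
    · exact hft x hxt
    · exact continuousWithinAt_of_notMem_closure (by rwa [ht.closure_eq])
  · refine ContinuousWithinAt.union ?_ (hft x hx)
    by_cases hxs : x ∈ s
    · exact hfs x hxs
    · exact continuousWithinAt_of_notMem_closure (by rwa [hs.closure_eq])

open Set in
/-- Lemma 5.2 of the paper: under property (H) for a basis `𝒰`, if `a ∈ Y` is a boundary point
of the closed set `Y` and `a ∈ U ∈ 𝒰`, then any map of `Y \ U` into `K` extends over `Y`. -/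
theorem propertyH_extension {X L : Type*} [TopologicalSpace X] [CompactSpace X] [T2Space X]
    [TopologicalSpace L] (𝒰 : Set (Set X))
    (hbasis : TopologicalSpace.IsTopologicalBasis 𝒰)
    (hH : ∀ U ∈ 𝒰, ∀ g : X → L, ContinuousOn g (frontier U) →
      ∀ V : Set X, IsOpen V → V.Nonempty → V ⊆ U →
        ∃ g' : X → L, ContinuousOn g' (closure U \ V) ∧ Set.EqOn g' g (frontier U))
    (Y : Set X) (hY : IsClosed Y) (a : X) (haY : a ∈ Y) (habd : a ∈ frontier Y)
    (U : Set X) (hU : U ∈ 𝒰) (haU : a ∈ U)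
    (hdim : ∀ B : Set X, IsClosed B → B ⊆ frontier U → ∀ g : X → L, ContinuousOn g B →
      ∃ g' : X → L, ContinuousOn g' (frontier U) ∧ Set.EqOn g' g B) :
    ∀ f : X → L, ContinuousOn f (Y \ U) →
      ∃ F : X → L, ContinuousOn F Y ∧ Set.EqOn F f (Y \ U) := by
  intro f hf
  classical
  have hUopen : IsOpen U := hbasis.isOpen hU
  -- B = Y ∩ frontier U
  set B : Set X := Y ∩ frontier U with hBdef
  have hBclosed : IsClosed B := hY.inter isClosed_frontier
  have hBsub : B ⊆ frontier U := inter_subset_right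
  have hBsub' : B ⊆ Y \ U := fun x hx =>
    ⟨hx.1, fun hxU => hx.2.2 (hUopen.interior_eq.symm ▸ hxU)⟩
  obtain ⟨g, hg, hgB⟩ := hdim B hBclosed hBsub f (hf.mono hBsub')
  -- V = U ∩ Yᶜ, nonempty since a ∈ frontier Y
  set V : Set X := U ∩ Yᶜ with hVdef
  have hVopen : IsOpen V := hUopen.inter (isOpen_compl_iff.mpr hY)
  have hVne : V.Nonempty := by
    have hns : ¬ U ⊆ Y := fun h => habd.2 (mem_interior.mpr ⟨U, h, hUopen, haU⟩)
    rw [Set.not_subset] at hns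
    obtain ⟨y, hyU, hy⟩ := hns
    exact ⟨y, hyU, hy⟩
  obtain ⟨g', hg', hg'F⟩ := hH U hU g hg V hVopen hVne inter_subset_left
  -- define F
  refine ⟨fun x => if x ∈ closure U then g' x else f x, ?_, ?_⟩
  · have hYsplit : Y = (Y \ U) ∪ (Y ∩ closure U) := by
      ext x
      constructor
      · intro hx
        by_cases h : x ∈ U
        · exact Or.inr ⟨hx, subset_closure h⟩
        · exact Or.inl ⟨hx, h⟩
      · rintro (hx | hx) <;> exact hx.1
    rw [hYsplit]
    apply continuousOn_union_closed (hY.sdiff hUopen) (hY.inter isClosed_closure)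
    · apply (hf.congr ?_)
      intro x hx
      by_cases h : x ∈ closure U
      · have hxF : x ∈ frontier U := ⟨h, by rw [hUopen.interior_eq]; exact hx.2⟩
        have hxB : x ∈ B := ⟨hx.1, hxF⟩
        simp only [h, if_true]
        rw [hg'F hxF, hgB hxB]
      · simp [h]
    · have hsub : Y ∩ closure U ⊆ closure U \ V := by
        rintro x ⟨hxY, hxc⟩
        exact ⟨hxc, fun hxV => hxV.2 hxY⟩
      apply (hg'.mono hsub).congr
      intro x hx
      simp [hx.2]
  · intro x hx
    by_cases h : x ∈ closure U
    · have hxF : x ∈ frontier U := ⟨h, by rw [hUopen.interior_eq]; exact hx.2⟩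
      have hxB : x ∈ B := ⟨hx.1, hxF⟩
      simp only [h, if_true]
      rw [hg'F hxF, hgB hxB]
    · simp [h]
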